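/- Let R = k[x,y,z]/(z^2 - xy) over a field k of characteristic 0. Then the module of Kähler differentials Ω^1_{R/k} is a torsion-free R-module. -/

import Mathlib

open MvPolynomial KaehlerDifferential

set_option maxHeartbeats 1000000
set_option synthInstance.maxHeartbeats 400000
set_option linter.unusedSectionVars false

namespace ConicAux

variable {k : Type} [Field k] [CharZero k]

noncomputable def fpoly : MvPolynomial (Fin 3) k := X 2 ^ 2 - X 0 * X 1
noncomputable def Iconic : Ideal (MvPolynomial (Fin 3) k) :=
  Ideal.span {(fpoly : MvPolynomial (Fin 3) k)}
noncomputable def Ψ : MvPolynomial (Fin 3) k →ₐ[k] MvPolynomial (Fin 2) k :=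
  aeval ![X 0 ^ 2, X 1 ^ 2, X 0 * X 1]

local notation "Rng" => MvPolynomial (Fin 3) k ⧸ (Iconic : Ideal (MvPolynomial (Fin 3) k))
local notation "mkq" => Ideal.Quotient.mk (Iconic : Ideal (MvPolynomial (Fin 3) k))

/-! ### basic facts about `Ψ` -/

@[simp] lemma Ψ_C (a : k) : Ψ (C a : MvPolynomial (Fin 3) k) = C a := by simp [Ψ, algebraMap_eq]
@[simp] lemma Ψ_X0 : Ψ (X 0 : MvPolynomial (Fin 3) k) = X 0 ^ 2 := aeval_X _ 0
@[simp] lemma Ψ_X1 : Ψ (X 1 : MvPolynomial (Fin 3) k) = X 1 ^ 2 := aeval_X _ 1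
@[simp] lemma Ψ_X2 : Ψ (X 2 : MvPolynomial (Fin 3) k) = X 0 * X 1 := aeval_X _ 2

lemma Ψ_f : Ψ (fpoly : MvPolynomial (Fin 3) k) = 0 := by
  simp [Ψ, fpoly]
  ring

noncomputable def ψ : Rng →ₐ[k] MvPolynomial (Fin 2) k :=
  Ideal.Quotient.liftₐ Iconic Ψ (by
    intro a ha
    rw [Iconic, Ideal.mem_span_singleton] at ha
    obtain ⟨c, rfl⟩ := ha
    rw [map_mul, Ψ_f, zero_mul])

@[simp] lemma ψ_mk (p : MvPolynomial (Fin 3) k) : ψ (mkq p) = Ψ p := rfl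

/-! ### evenness -/

def IsEv (p : MvPolynomial (Fin 2) k) : Prop := ∀ m ∈ p.support, Even (m 0 + m 1)

lemma IsEv.mul {p q : MvPolynomial (Fin 2) k} (hp : IsEv p) (hq : IsEv q) : IsEv (p * q) := by
  classical
  intro m hm
  obtain ⟨m₁, hm₁, m₂, hm₂, rfl⟩ := Finset.mem_add.mp (support_mul p q hm)
  have := (hp m₁ hm₁).add (hq m₂ hm₂)
  simpa [Finsupp.add_apply, add_add_add_comm] using this

lemma IsEv.add {p q : MvPolynomial (Fin 2) k} (hp : IsEv p) (hq : IsEv q) : IsEv (p + q) := by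
  intro m hm
  rcases Finset.mem_union.mp (Finsupp.support_add hm) with h | h
  · exact hp m h
  · exact hq m h

lemma isEv_C (a : k) : IsEv (C a : MvPolynomial (Fin 2) k) := by
  intro m hm
  rw [C_apply] at hm
  rcases Finset.mem_singleton.mp (Finset.mem_of_subset support_monomial_subset hm) with rfl
  simp

lemma isEv_monomial (m : Fin 2 →₀ ℕ) (c : k) (h : Even (m 0 + m 1)) :
    IsEv (monomial m c : MvPolynomial (Fin 2) k) := by
  intro m' hm'
  rcases Finset.mem_singleton.mp (Finset.mem_of_subset (support_monomial_subset) hm') with rfl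
  exact h

lemma isEv_X_mul_X : IsEv (X 0 * X 1 : MvPolynomial (Fin 2) k) := by
  rw [X, X, monomial_mul]
  exact isEv_monomial _ _ (by simp)

lemma isEv_X_sq (i : Fin 2) : IsEv (X i ^ 2 : MvPolynomial (Fin 2) k) := by
  rw [X_pow_eq_monomial]
  refine isEv_monomial _ _ ?_
  fin_cases i <;> simp [Finsupp.single_apply]

lemma isEv_Psi (p : MvPolynomial (Fin 3) k) : IsEv (Ψ p) := by
  induction p using MvPolynomial.induction_on with
  | C a => rw [Ψ_C]; exact isEv_C a
  | add p q hp hq => rw [map_add]; exact hp.add hq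
  | mul_X p i hp =>
    rw [map_mul]
    refine hp.mul ?_
    have : Ψ (X i : MvPolynomial (Fin 3) k) = ![X 0 ^ 2, X 1 ^ 2, X 0 * X 1] i := aeval_X _ i
    rw [this]
    fin_cases i <;> simp only [Matrix.cons_val_zero, Matrix.cons_val_one, Matrix.head_cons]
    · exact isEv_X_sq 0
    · exact isEv_X_sq 1
    · exact isEv_X_mul_X

lemma monomial_fin2 (m : Fin 2 →₀ ℕ) (c : k) :
    monomial m c = C c * X 0 ^ (m 0) * X 1 ^ (m 1) := by
  rw [monomial_eq, Finsupp.prod_fintype _ _ (by simp), Fin.prod_univ_two, mul_assoc]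

lemma mono_mem_range (m : Fin 2 →₀ ℕ) (c : k) (h : Even (m 0 + m 1)) :
    (monomial m c : MvPolynomial (Fin 2) k) ∈ Set.range (Ψ (k := k)) := by
  rcases Nat.even_or_odd (m 0) with h0 | h0
  · have h1 : Even (m 1) := (Nat.even_add.mp h).mp h0
    obtain ⟨a, ha⟩ := h0
    obtain ⟨b, hb⟩ := h1
    refine ⟨C c * X 0 ^ a * X 1 ^ b, ?_⟩
    rw [map_mul, map_mul, map_pow, map_pow, Ψ_C, Ψ_X0, Ψ_X1, monomial_fin2, ha, hb]
    ring
  · have h1 : Odd (m 1) := by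
      rcases Nat.even_or_odd (m 1) with h1 | h1
      · exact absurd ((Nat.even_add.mp h).mpr h1) (Nat.not_even_iff_odd.mpr h0)
      · exact h1
    obtain ⟨a, ha⟩ := h0
    obtain ⟨b, hb⟩ := h1
    refine ⟨C c * X 0 ^ a * X 1 ^ b * X 2, ?_⟩
    rw [map_mul, map_mul, map_mul, map_pow, map_pow, Ψ_C, Ψ_X0, Ψ_X1, Ψ_X2,
      monomial_fin2, ha, hb]
    ring

lemma isEv_mem_range (u : MvPolynomial (Fin 2) k) (h : IsEv u) :
    ∃ q, Ψ q = u := by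
  have : (∑ m ∈ u.support, monomial m (coeff m u)) ∈ (Ψ (k := k)).range :=
    Subalgebra.sum_mem _ fun m hm => mono_mem_range m (coeff m u) (h m hm)
  rw [← as_sum u] at this
  exact (AlgHom.mem_range _).mp this

lemma IsEv.of_X1_sq_mul {u : MvPolynomial (Fin 2) k} (h : IsEv (X 1 ^ 2 * u)) : IsEv u := by
  intro m hm
  have hc : coeff (m + Finsupp.single 1 2) (X 1 ^ 2 * u) = coeff m u := by
    rw [X_pow_eq_monomial, add_comm m, coeff_monomial_mul, one_mul]
  have hmem : (m + Finsupp.single 1 2) ∈ (X 1 ^ 2 * u).support := by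
    rw [mem_support_iff, hc]
    exact mem_support_iff.mp hm
  have := h _ hmem
  simp only [Finsupp.add_apply, Finsupp.single_apply] at this
  norm_num at this
  obtain ⟨c, hc⟩ := this
  exact ⟨c - 1, by omega⟩

/-! ### injectivity of `ψ` -/

noncomputable def g (m : Fin 2 →₀ ℕ) : MvPolynomial (Fin 3) k :=
  X 0 ^ (m 0 / 2) * X 1 ^ (m 1 / 2) * X 2 ^ (m 0 % 2)

noncomputable def θ : MvPolynomial (Fin 2) k →ₗ[k] MvPolynomial (Fin 3) k :=
  (basisMonomials (Fin 2) k).constr k g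

lemma θ_monomial (m : Fin 2 →₀ ℕ) (c : k) :
    θ (monomial m c) = c • (g m : MvPolynomial (Fin 3) k) := by
  have h1 : (monomial m c : MvPolynomial (Fin 2) k) = c • monomial m 1 := by
    rw [smul_monomial, smul_eq_mul, mul_one]
  rw [h1, map_smul]
  congr 1
  have : (basisMonomials (Fin 2) k) m = monomial m 1 := by
    rw [coe_basisMonomials]
  rw [θ, ← this, Module.Basis.constr_basis]

lemma cong_pow (n : ℕ) :
    (fpoly : MvPolynomial (Fin 3) k) ∣ (X 0 * X 1) ^ (n / 2) * X 2 ^ (n % 2) - X 2 ^ n := by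
  have hn : X 2 ^ n = ((X 2 ^ 2) ^ (n / 2) * X 2 ^ (n % 2) : MvPolynomial (Fin 3) k) := by
    rw [← pow_mul, ← pow_add]
    congr 1
    omega
  rw [hn, ← sub_mul]
  refine Dvd.dvd.mul_right ?_ _
  have := sub_dvd_pow_sub_pow (X 0 * X 1 : MvPolynomial (Fin 3) k) (X 2 ^ 2) (n / 2)
  rw [fpoly, ← neg_sub (X 0 * X 1), neg_dvd]
  exact this

lemma monomial_fin3 (e : Fin 3 →₀ ℕ) (c : k) :
    monomial e c = C c * X 0 ^ (e 0) * X 1 ^ (e 1) * X 2 ^ (e 2) := by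
  rw [monomial_eq, Finsupp.prod_fintype _ _ (by simp), Fin.prod_univ_three]
  ring

lemma monomial_fin2' (a b : ℕ) :
    (X 0 ^ a * X 1 ^ b : MvPolynomial (Fin 2) k) =
      monomial (Finsupp.single 0 a + Finsupp.single 1 b) 1 := by
  rw [monomial_eq, Finsupp.prod_fintype _ _ (by simp), Fin.prod_univ_two]
  simp [Finsupp.single_apply]

lemma Ψ_monomial (e : Fin 3 →₀ ℕ) :
    Ψ (monomial e 1 : MvPolynomial (Fin 3) k) =
      monomial (Finsupp.single 0 (2 * e 0 + e 2) + Finsupp.single 1 (2 * e 1 + e 2)) 1 := by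
  rw [monomial_fin3, map_mul, map_mul, map_mul, map_pow, map_pow, map_pow,
    Ψ_C, Ψ_X0, Ψ_X1, Ψ_X2, ← monomial_fin2']
  rw [C_1, one_mul]
  ring

lemma theta_psi_monomial (e : Fin 3 →₀ ℕ) :
    θ (Ψ (monomial e 1 : MvPolynomial (Fin 3) k)) - monomial e 1
      ∈ (Iconic : Ideal (MvPolynomial (Fin 3) k)) := by
  rw [Ψ_monomial, θ_monomial, one_smul, g]
  simp only [Finsupp.add_apply, Finsupp.single_apply]
  norm_num
  rw [Iconic, Ideal.mem_span_singleton, monomial_fin3, C_1, one_mul]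
  have key := cong_pow (k := k) (e 2)
  have harith0 : (2 * e 0 + e 2) / 2 = e 0 + e 2 / 2 := by omega
  have harith1 : (2 * e 1 + e 2) / 2 = e 1 + e 2 / 2 := by omega
  have harith2 : (2 * e 0 + e 2) % 2 = e 2 % 2 := by omega
  rw [harith0, harith1]
  have expand : (X 0 : MvPolynomial (Fin 3) k) ^ (e 0 + e 2 / 2) * X 1 ^ (e 1 + e 2 / 2)
        * X 2 ^ (e 2 % 2) - X 0 ^ e 0 * X 1 ^ e 1 * X 2 ^ (e 2)
      = (X 0 ^ e 0 * X 1 ^ e 1) * ((X 0 * X 1) ^ (e 2 / 2) * X 2 ^ (e 2 % 2) - X 2 ^ (e 2)) := by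
    ring
  rw [expand]
  exact Dvd.dvd.mul_left key _

lemma theta_psi (p : MvPolynomial (Fin 3) k) :
    θ (Ψ p) - p ∈ (Iconic : Ideal (MvPolynomial (Fin 3) k)) := by
  have hspan : p ∈ Submodule.span k
      (Set.range fun e : Fin 3 →₀ ℕ => (monomial e 1 : MvPolynomial (Fin 3) k)) := by
    rw [show (Set.range fun e : Fin 3 →₀ ℕ => (monomial e 1 : MvPolynomial (Fin 3) k)) =
        Set.range (basisMonomials (Fin 3) k) by rw [coe_basisMonomials]]
    rw [Module.Basis.span_eq]
    trivial
  refine Submodule.span_induction ?_ ?_ ?_ ?_ hspan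
  · rintro x ⟨e, rfl⟩
    exact theta_psi_monomial e
  · simp
  · intro x y _ _ hx hy
    have := Ideal.add_mem _ hx hy
    convert this using 1
    rw [map_add, map_add]
    ring
  · intro c x _ hx
    have : c • (θ (Ψ x) - x) ∈ (Iconic : Ideal (MvPolynomial (Fin 3) k)) :=
      Submodule.smul_mem ((Iconic : Ideal (MvPolynomial (Fin 3) k)).restrictScalars k) c hx
    convert this using 1
    rw [map_smul, map_smul, smul_sub]

lemma ker_psi (p : MvPolynomial (Fin 3) k) (h : Ψ p = 0) :
    p ∈ (Iconic : Ideal (MvPolynomial (Fin 3) k)) := by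
  have := theta_psi p
  rw [h, map_zero, zero_sub] at this
  simpa using Submodule.neg_mem _ this

lemma ψ_inj : Function.Injective (ψ : Rng →ₐ[k] MvPolynomial (Fin 2) k) := by
  rw [injective_iff_map_eq_zero]
  intro r hr
  obtain ⟨p, rfl⟩ := Ideal.Quotient.mk_surjective r
  rw [ψ_mk] at hr
  exact (Submodule.Quotient.mk_eq_zero _).mpr (ker_psi p hr)

/-! ### primality of `X 1` -/

lemma prime_X1 : Prime (X 1 : MvPolynomial (Fin 2) k) := by
  let e : MvPolynomial (Fin 2) k ≃ₐ[k] Polynomial (MvPolynomial (Fin 1) k) :=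
    (renameEquiv k (Equiv.swap 0 1)).trans (finSuccEquiv k 1)
  have h : e (X 1) = Polynomial.X := by
    simp [e, finSuccEquiv_X_zero]
  exact (MulEquiv.prime_iff (p := X 1) e).mp (h ▸ Polynomial.prime_X)

/-! ### representation of differentials -/

lemma D_mk (p : MvPolynomial (Fin 3) k) :
    (D k Rng) (mkq p) = ∑ i : Fin 3, mkq (pderiv i p) • (D k Rng) (mkq (X i)) := by
  induction p using MvPolynomial.induction_on with
  | C a =>
    have : (mkq (C a) : Rng) = algebraMap k Rng a := rfl
    rw [this, Derivation.map_algebraMap]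
    simp [zero_smul Rng (A := Ω[Rng⁄k])]
  | add p q hp hq =>
    rw [map_add, map_add, hp, hq, ← Finset.sum_add_distrib]
    congr 1
    ext i
    rw [map_add (pderiv i), map_add (Ideal.Quotient.mk _), add_smul (R := Rng) (M := Ω[Rng⁄k])]
  | mul_X p i hp =>
    rw [map_mul, Derivation.leibniz, hp]
    rw [Finset.smul_sum]
    have : ∀ j : Fin 3, pderiv j (p * X i) = p * pderiv j (X i) + X i * pderiv j p := by
      intro j
      rw [pderiv_mul]
      ring
    simp_rw [this, map_add, map_mul, add_smul (R := Rng) (M := Ω[Rng⁄k]), mul_smul (α := Rng) (β := Ω[Rng⁄k])]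
    rw [Finset.sum_add_distrib]
    have hsingle : ∑ j : Fin 3, mkq p • mkq (pderiv j (X i)) • (D k Rng) (mkq (X j))
        = mkq p • (D k Rng) (mkq (X i)) := by
      rw [Finset.sum_eq_single i]
      · rw [pderiv_X_self]
        simp [one_smul Rng (α := Ω[Rng⁄k])]
      · intro j _ hj
        rw [pderiv_X, Pi.single_eq_of_ne (Ne.symm hj)]
        simp [zero_smul Rng (A := Ω[Rng⁄k])]
      · simp
    rw [hsingle]

lemma rep (m : Ω[Rng⁄k]) :
    ∃ a b c : Rng, m = a • (D k Rng) (mkq (X 0)) + b • (D k Rng) (mkq (X 1))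
      + c • (D k Rng) (mkq (X 2)) := by
  have hm : m ∈ Submodule.span Rng (Set.range fun i : Fin 3 => (D k Rng) (mkq (X i))) := by
    have h1 : Set.range (D k Rng) ⊆
        (Submodule.span Rng (Set.range fun i : Fin 3 => (D k Rng) (mkq (X i))) : Set _) := by
      rintro _ ⟨r, rfl⟩
      obtain ⟨p, rfl⟩ := Ideal.Quotient.mk_surjective r
      rw [D_mk]
      refine Submodule.sum_mem _ fun i _ => Submodule.smul_mem _ _ ?_
      exact Submodule.subset_span ⟨i, rfl⟩
    have := Submodule.span_le.mpr h1
    rw [span_range_derivation] at this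
    exact this trivial
  obtain ⟨c, hc⟩ := (Submodule.mem_span_range_iff_exists_fun _).mp hm
  exact ⟨c 0, c 1, c 2, by rw [← hc, Fin.sum_univ_three]⟩

/-! ### the lifted partial derivative maps -/

noncomputable def algRA : Algebra Rng (MvPolynomial (Fin 2) k) :=
  (ψ.toRingHom : Rng →+* MvPolynomial (Fin 2) k).toAlgebra

attribute [local instance] algRA

lemma towerKRA : IsScalarTower k Rng (MvPolynomial (Fin 2) k) :=
  IsScalarTower.of_algebraMap_eq fun a => by
    show algebraMap k (MvPolynomial (Fin 2) k) a = ψ (algebraMap k Rng a)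
    rw [AlgHom.commutes]

attribute [local instance] towerKRA

noncomputable def Lmap (i : Fin 2) : Ω[Rng⁄k] →ₗ[Rng] MvPolynomial (Fin 2) k :=
  (((pderiv i : Derivation k (MvPolynomial (Fin 2) k) (MvPolynomial (Fin 2) k)).compAlgebraMap
    Rng)).liftKaehlerDifferential

lemma Lmap_D (i : Fin 2) (r : Rng) :
    Lmap i ((D k Rng) r) = pderiv i (ψ r) := by
  rw [Lmap, Derivation.liftKaehlerDifferential_comp_D]
  rfl

lemma smul_eq_psi_mul (r : Rng) (x : MvPolynomial (Fin 2) k) : r • x = ψ r * x :=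
  Algebra.smul_def r x

/-! ### main theorem -/

theorem main (r : Rng) (m : Ω[Rng⁄k]) (hr : r ≠ 0) (hm : r • m = 0) : m = 0 := by
  obtain ⟨a, b, c, rfl⟩ := rep m
  -- the images under the two lifted derivations vanish
  have hψr : ψ r ≠ 0 := fun h => hr (ψ_inj (by rwa [map_zero]))
  have hL : ∀ i : Fin 2, Lmap i (a • (D k Rng) (mkq (X 0)) + b • (D k Rng) (mkq (X 1))
      + c • (D k Rng) (mkq (X 2))) = 0 := by
    intro i
    have h0 : Lmap i (r • (a • (D k Rng) (mkq (X 0)) + b • (D k Rng) (mkq (X 1))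
        + c • (D k Rng) (mkq (X 2)))) = 0 := by rw [hm, map_zero]
    rw [map_smul, smul_eq_psi_mul] at h0
    exact (mul_eq_zero.mp h0).resolve_left hψr
  have key0 := hL 0
  have key1 := hL 1
  rw [map_add, map_add, map_smul, map_smul, map_smul, Lmap_D, Lmap_D, Lmap_D,
    ψ_mk, ψ_mk, ψ_mk, Ψ_X0, Ψ_X1, Ψ_X2] at key0 key1
  rw [smul_eq_psi_mul, smul_eq_psi_mul, smul_eq_psi_mul] at key0 key1
  have hp00 : pderiv (0 : Fin 2) ((X 0 : MvPolynomial (Fin 2) k) ^ 2) = 2 * X 0 := by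
    simp [pderiv_pow]
  have hp01 : pderiv (0 : Fin 2) ((X 1 : MvPolynomial (Fin 2) k) ^ 2) = 0 := by
    simp [pderiv_pow, pderiv_X, Pi.single_eq_of_ne]
  have hp02 : pderiv (0 : Fin 2) ((X 0 : MvPolynomial (Fin 2) k) * X 1) = X 1 := by
    simp [pderiv_mul, pderiv_X, Pi.single_eq_of_ne]
  have hp10 : pderiv (1 : Fin 2) ((X 0 : MvPolynomial (Fin 2) k) ^ 2) = 0 := by
    simp [pderiv_pow, pderiv_X, Pi.single_eq_of_ne]
  have hp11 : pderiv (1 : Fin 2) ((X 1 : MvPolynomial (Fin 2) k) ^ 2) = 2 * X 1 := by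
    simp [pderiv_pow]
  have hp12 : pderiv (1 : Fin 2) ((X 0 : MvPolynomial (Fin 2) k) * X 1) = X 0 := by
    simp [pderiv_mul, pderiv_X, Pi.single_eq_of_ne]
  rw [hp00, hp01, hp02] at key0
  rw [hp10, hp11, hp12] at key1
  -- eq1 : 2 * ψ a * X 0 + ψ c * X 1 = 0 ; eq2 : 2 * ψ b * X 1 + ψ c * X 0 = 0
  have eq1 : 2 * ψ a * X 0 + ψ c * X 1 = 0 := by
    rw [← key0]; ring
  have eq2 : 2 * ψ b * X 1 + ψ c * X 0 = 0 := by
    rw [← key1]; ring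
  -- divisibility chain
  have hX1 : Prime (X 1 : MvPolynomial (Fin 2) k) := prime_X1
  have hXne : (X 1 : MvPolynomial (Fin 2) k) ≠ 0 := X_ne_zero 1
  have h2ne : (2 : MvPolynomial (Fin 2) k) ≠ 0 := two_ne_zero
  have hnd0 : ¬ (X 1 : MvPolynomial (Fin 2) k) ∣ X 0 := by
    rw [X_dvd_X]
    simp
  have hdvd_a : (X 1 : MvPolynomial (Fin 2) k) ∣ ψ a := by
    have : (X 1 : MvPolynomial (Fin 2) k) ∣ 2 * ψ a * X 0 := by
      refine ⟨-(ψ c), ?_⟩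
      linear_combination eq1
    rcases hX1.dvd_mul.mp this with h | h
    · rcases hX1.dvd_mul.mp h with h | h
      · have h2unit : IsUnit (2 : MvPolynomial (Fin 2) k) := by
          have := (isUnit_iff_ne_zero.mpr (two_ne_zero (α := k))).map
            (algebraMap k (MvPolynomial (Fin 2) k))
          rwa [map_ofNat] at this
        exact absurd (isUnit_of_dvd_unit h h2unit) hX1.not_unit
      · exact h
    · exact absurd h hnd0
  obtain ⟨α, hα⟩ := hdvd_a
  have hc_eq : ψ c = -(2 * α * X 0) := by
    have h1 : ψ c * X 1 = -(2 * α * X 0) * X 1 := by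
      linear_combination eq1 - (2 * X 0) * hα
    exact mul_right_cancel₀ hXne h1
  have hb_eq : ψ b * X 1 = α * X 0 ^ 2 := by
    have h2 : (2 : MvPolynomial (Fin 2) k) * (ψ b * X 1) = 2 * (α * X 0 ^ 2) := by
      linear_combination eq2 - X 0 * hc_eq
    exact mul_left_cancel₀ h2ne h2
  have hdvd_α : (X 1 : MvPolynomial (Fin 2) k) ∣ α := by
    have : (X 1 : MvPolynomial (Fin 2) k) ∣ α * X 0 ^ 2 := ⟨ψ b, by rw [← hb_eq]; ring⟩
    rcases hX1.dvd_mul.mp this with h | h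
    · exact h
    · rcases hX1.dvd_mul.mp (by rwa [pow_two] at h) with h | h <;> exact absurd h hnd0
  obtain ⟨u, hu⟩ := hdvd_α
  -- now `ψ a = X1 ^ 2 * u`, `ψ b = X0 ^ 2 * u`, `ψ c = -2 * (X0 * X1) * u`
  have ha2 : ψ a = X 1 ^ 2 * u := by rw [hα, hu]; ring
  have hb2 : ψ b = X 0 ^ 2 * u := by
    refine mul_right_cancel₀ hXne ?_
    rw [hb_eq, hu]
    ring
  have hc2 : ψ c = -2 * (X 0 * X 1) * u := by rw [hc_eq, hu]; ring
  -- u is even, hence in the image of ψ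
  have hEv : IsEv u := by
    obtain ⟨pa, hpa⟩ := Ideal.Quotient.mk_surjective a
    have : IsEv (ψ a) := by rw [← hpa, ψ_mk]; exact isEv_Psi pa
    rw [ha2] at this
    exact IsEv.of_X1_sq_mul this
  obtain ⟨q, hq⟩ := isEv_mem_range u hEv
  set w : Rng := mkq q with hw
  have hψw : ψ w = u := hq
  -- identify a b c
  have ha3 : a = mkq (X 1) * w := by
    refine ψ_inj ?_
    rw [map_mul, ha2, hψw]
    show X 1 ^ 2 * u = Ψ (X 1) * u
    rw [Ψ_X1]
  have hb3 : b = mkq (X 0) * w := by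
    refine ψ_inj ?_
    rw [map_mul, hb2, hψw]
    show X 0 ^ 2 * u = Ψ (X 0) * u
    rw [Ψ_X0]
  have hc3 : c = -2 * mkq (X 2) * w := by
    refine ψ_inj ?_
    rw [hc2]
    show -2 * (X 0 * X 1) * u = ψ (-2 * mkq (X 2) * w)
    rw [map_mul, map_mul, hψw]
    show -2 * (X 0 * X 1) * u = ψ (-2 : Rng) * Ψ (X 2) * u
    rw [Ψ_X2, map_neg, map_ofNat]
  -- conclude
  rw [ha3, hb3, hc3]
  have hrel : mkq (X 1) • (D k Rng) (mkq (X 0)) + mkq (X 0) • (D k Rng) (mkq (X 1))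
      - (2 : Rng) • mkq (X 2) • (D k Rng) (mkq (X 2)) = 0 := by
    have hd1 : (D k Rng) (mkq (X 0 * X 1)) =
        mkq (X 0) • (D k Rng) (mkq (X 1)) + mkq (X 1) • (D k Rng) (mkq (X 0)) := by
      rw [map_mul (Ideal.Quotient.mk _), Derivation.leibniz]
    have hd2 : (D k Rng) (mkq (X 2 ^ 2)) = (2 : Rng) • mkq (X 2) • (D k Rng) (mkq (X 2)) := by
      rw [pow_two, map_mul (Ideal.Quotient.mk _), Derivation.leibniz, two_smul Rng (M := Ω[Rng⁄k])]
    have heq : mkq (X 0 * X 1) = mkq (X 2 ^ 2) := by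
      rw [Ideal.Quotient.mk_eq_mk_iff_sub_mem]
      rw [Iconic, Ideal.mem_span_singleton, fpoly]
      exact ⟨-1, by ring⟩
    have h0 : (D k Rng) (mkq (X 0 * X 1)) - (D k Rng) (mkq (X 2 ^ 2)) = 0 := by
      rw [heq, sub_self]
    rw [hd1, hd2] at h0
    rw [← h0]
    abel
  have : (mkq (X 1) * w) • (D k Rng) (mkq (X 0)) + (mkq (X 0) * w) • (D k Rng) (mkq (X 1))
      + (-2 * mkq (X 2) * w) • (D k Rng) (mkq (X 2))
      = w • (mkq (X 1) • (D k Rng) (mkq (X 0)) + mkq (X 0) • (D k Rng) (mkq (X 1))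
        - (2 : Rng) • mkq (X 2) • (D k Rng) (mkq (X 2))) := by
    module
  rw [this, hrel, smul_zero]

end ConicAux

/-- Let `R = k[x,y,z]/(z² - xy)` over a field `k` of characteristic 0.
Then the module of Kähler differentials `Ω¹_{R/k}` is a torsion-free `R`-module: the only
element annihilated by a nonzero element of `R` is `0`. -/
theorem kaehler_torsionFree_conic (k : Type) [Field k] [CharZero k] :
    letI I : Ideal (MvPolynomial (Fin 3) k) :=
      Ideal.span {(X 2 : MvPolynomial (Fin 3) k) ^ 2 - X 0 * X 1}
    letI R := MvPolynomial (Fin 3) k ⧸ I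
    ∀ (r : R) (m : Ω[R⁄k]), r ≠ 0 → r • m = 0 → m = 0 := by
  intro r m hr hm
  exact ConicAux.main r m hr hm
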